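/- Error-disturbance relation (Theorem 1): Let A, B, M_out, B_out be self-adjoint operators on a complex Hilbert space with [M_out, B_out] = 0, Ψ a unit vector, Ψ⊥ a unit vector orthogonal to Ψ, N = M_out − A, D = B_out − B, ε² = ⟨Ψ, N²Ψ⟩, η² = ⟨Ψ, D²Ψ⟩. Then ε² + η² ≥ ±i⟨Ψ,[A,B]Ψ⟩ ∓ i⟨Ψ,[M_out,B]Ψ⟩ ∓ i⟨Ψ,[A,B_out]Ψ⟩ + |⟨Ψ,(N ± iD)Ψ⊥⟩|². -/

import Mathlib

open Complex

local notation "⟪" x ", " y "⟫" => @inner ℂ _ _ x y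

/-- Theorem 1 (new error–disturbance relation):
ε² + η² ≥ ±i⟨Ψ,[A,B]Ψ⟩ ∓ i⟨Ψ,[M_out,B]Ψ⟩ ∓ i⟨Ψ,[A,B_out]Ψ⟩ + |⟨Ψ,(N ± iD)Ψ⊥⟩|². -/
theorem error_disturbance_theorem1
    {E : Type*} [NormedAddCommGroup E] [InnerProductSpace ℂ E]
    (A B Mo Bo : E →ₗ[ℂ] E)
    (hA : ∀ x y : E, ⟪A x, y⟫ = ⟪x, A y⟫)
    (hB : ∀ x y : E, ⟪B x, y⟫ = ⟪x, B y⟫)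
    (hMo : ∀ x y : E, ⟪Mo x, y⟫ = ⟪x, Mo y⟫)
    (hBo : ∀ x y : E, ⟪Bo x, y⟫ = ⟪x, Bo y⟫)
    (hcomm : Mo ∘ₗ Bo = Bo ∘ₗ Mo)
    (N D : E →ₗ[ℂ] E) (hN : N = Mo - A) (hD : D = Bo - B)
    (Ψ Ψp : E) (hΨ : ‖Ψ‖ = 1) (hΨp : ‖Ψp‖ = 1) (horth : ⟪Ψ, Ψp⟫ = 0)
    (s : ℝ) (hs : s = 1 ∨ s = -1) :
    (⟪Ψ, N (N Ψ)⟫).re + (⟪Ψ, D (D Ψ)⟫).re ≥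
      s * (Complex.I * ⟪Ψ, A (B Ψ) - B (A Ψ)⟫).re
        - s * (Complex.I * ⟪Ψ, Mo (B Ψ) - B (Mo Ψ)⟫).re
        - s * (Complex.I * ⟪Ψ, A (Bo Ψ) - Bo (A Ψ)⟫).re
        + ‖⟪Ψ, N Ψp + ((s : ℂ) * Complex.I) • D Ψp⟫‖ ^ 2 := by
  have hs2 : s^2 = 1 := by rcases hs with h|h <;> simp [h]
  have hNsa : ∀ x y : E, ⟪N x, y⟫ = ⟪x, N y⟫ := by
    intro x y
    simp [hN, LinearMap.sub_apply, inner_sub_left, inner_sub_right, hMo, hA]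
  have hDsa : ∀ x y : E, ⟪D x, y⟫ = ⟪x, D y⟫ := by
    intro x y
    simp [hD, LinearMap.sub_apply, inner_sub_left, inner_sub_right, hBo, hB]
  set u := N Ψ with hu
  set v := D Ψ with hv
  have hLN : (⟪Ψ, N (N Ψ)⟫).re = ‖u‖^2 := by
    rw [← hNsa, inner_self_eq_norm_sq_to_K (𝕜 := ℂ) u]; norm_cast
  have hLD : (⟪Ψ, D (D Ψ)⟫).re = ‖v‖^2 := by
    rw [← hDsa, inner_self_eq_norm_sq_to_K (𝕜 := ℂ) v]; norm_cast
  -- commutator decomposition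
  have hMoBo : Mo (Bo Ψ) = Bo (Mo Ψ) := LinearMap.ext_iff.mp hcomm Ψ
  have hdecomp : A (B Ψ) - B (A Ψ) - (Mo (B Ψ) - B (Mo Ψ)) - (A (Bo Ψ) - Bo (A Ψ))
      = N (D Ψ) - D (N Ψ) := by
    subst hN hD
    simp only [LinearMap.sub_apply, map_sub]
    rw [hMoBo]; abel
  set c : ℝ := s * (Complex.I * ⟪Ψ, N (D Ψ) - D (N Ψ)⟫).re with hc
  have hrhs1 : s * (Complex.I * ⟪Ψ, A (B Ψ) - B (A Ψ)⟫).re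
        - s * (Complex.I * ⟪Ψ, Mo (B Ψ) - B (Mo Ψ)⟫).re
        - s * (Complex.I * ⟪Ψ, A (Bo Ψ) - Bo (A Ψ)⟫).re = c := by
    have hz : ⟪Ψ, A (B Ψ) - B (A Ψ)⟫ - ⟪Ψ, Mo (B Ψ) - B (Mo Ψ)⟫
        - ⟪Ψ, A (Bo Ψ) - Bo (A Ψ)⟫ = ⟪Ψ, N (D Ψ) - D (N Ψ)⟫ := by
      rw [← inner_sub_right, ← inner_sub_right, hdecomp]
    rw [hc, ← hz]
    simp only [mul_sub, Complex.sub_re]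
  set w : E := u - ((s : ℂ) * Complex.I) • v with hw
  have habs : ⟪Ψ, N Ψp + ((s : ℂ) * Complex.I) • D Ψp⟫ = ⟪w, Ψp⟫ := by
    rw [inner_add_right, inner_smul_right, ← hNsa, ← hDsa, hw, inner_sub_left,
      inner_smul_left]
    simp only [map_mul, Complex.conj_ofReal, Complex.conj_I]
    ring
  have hCS : ‖⟪w, Ψp⟫‖ ≤ ‖w‖ := by
    have h := norm_inner_le_norm (𝕜 := ℂ) w Ψp
    rw [hΨp, mul_one] at h
    simpa using h
  have hcz : c = -(2 * s * (⟪u, v⟫).im) := by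
    rw [hc, inner_sub_right, ← hNsa Ψ (D Ψ), ← hDsa Ψ (N Ψ), ← hu, ← hv,
      ← inner_conj_symm u v]
    simp only [mul_sub, Complex.sub_re, Complex.mul_re, Complex.I_re, Complex.I_im,
      Complex.conj_re, Complex.conj_im]
    ring
  have hre : (⟪u, ((s : ℂ) * Complex.I) • v⟫).re = -(s * (⟪u, v⟫).im) := by
    rw [inner_smul_right]
    simp only [map_mul, Complex.mul_re, Complex.mul_im, Complex.I_re, Complex.I_im,
      Complex.ofReal_re, Complex.ofReal_im]
    ring
  have hnv : ‖((s : ℂ) * Complex.I) • v‖ ^ 2 = ‖v‖ ^ 2 := by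
    rw [norm_smul, mul_pow]
    have h1 : ‖(s : ℂ) * Complex.I‖ ^ 2 = 1 := by
      simp [norm_mul, Complex.norm_real, Complex.norm_I, Real.norm_eq_abs, sq_abs, hs2]
    rw [h1, one_mul]
  have hW : ‖w‖ ^ 2 = ‖u‖ ^ 2 + ‖v‖ ^ 2 - c := by
    rw [hw, @norm_sub_sq ℂ]
    simp only [RCLike.re_to_complex]
    rw [hre, hnv, hcz]
    ring
  have habs2 : ‖⟪Ψ, N Ψp + ((s : ℂ) * Complex.I) • D Ψp⟫‖ ^ 2 ≤ ‖w‖ ^ 2 := by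
    rw [habs]
    exact pow_le_pow_left₀ (norm_nonneg _) hCS 2
  rw [hLN, hLD, hrhs1]
  have := habs2
  linarith [hW, habs2]
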